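/- Let X be a measurable space, μ a probability measure on X, f* : X → ℝ measurable, and q : X × ℝ → [0,∞) measurable such that for each x, q(x,·) is a probability density on ℝ that is twice continuously differentiable in the second variable, with B := sup_{x∈X, t∈ℝ} |∂²_t q(x,t)| < ∞. Let φ : ℝ → [0,∞) be bounded, even, with ∫_ℝ φ(u) du = 1 and ∫_ℝ u² φ(u) du < ∞. Then for every measurable f : X → ℝ and every σ > 0, | R^σ(f) − R(f) | ≤ (σ²/2) · B · ∫_ℝ u² φ(u) du, where R(f) = ∫_X q(x, f(x) − f*(x)) dμ(x) and R^σ(f) = ∫_X ∫_ℝ (1/σ) φ((t − (f(x) − f*(x)))/σ) q(x,t) dt dμ(x) (the intermediate estimate in the proof of Theorem 4.2 showing that the generalization risk is a second-order approximation of the modal regression risk). -/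

import Mathlib

open MeasureTheory

/-- Second-order Taylor bound for a `C²` function with uniformly bounded second
derivative. -/
private lemma taylor_bound_aux (g : ℝ → ℝ) (hg : ContDiff ℝ 2 g) (B : ℝ)
    (hB : ∀ t, |deriv (deriv g) t| ≤ B) (a s : ℝ) :
    |g (a + s) - g a - s * deriv g a| ≤ B * s ^ 2 / 2 := by
  have hB0 : 0 ≤ B := le_trans (abs_nonneg _) (hB 0)
  have hg2 : ContDiff ℝ (1 + 1) g := by
    have : ((1 : WithTop ℕ∞) + 1) = 2 := by norm_num
    rw [this]; exact hg
  rw [contDiff_succ_iff_deriv] at hg2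
  obtain ⟨hgd, -, hg1⟩ := hg2
  have hg1' : Differentiable ℝ (deriv g) := hg1.differentiable one_ne_zero
  have hLip : LipschitzWith B.toNNReal (deriv g) := by
    apply lipschitzWith_of_nnnorm_deriv_le hg1'
    intro t
    rw [← NNReal.coe_le_coe, coe_nnnorm, Real.coe_toNNReal _ hB0, Real.norm_eq_abs]
    exact hB t
  have hLip' : ∀ r : ℝ, |deriv g r - deriv g a| ≤ B * |r - a| := by
    intro r
    have h := hLip.dist_le_mul r a
    rw [Real.dist_eq, Real.dist_eq, Real.coe_toNNReal _ hB0] at h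
    exact h
  have hcont : Continuous (deriv g) := hg1'.continuous
  have hFTC : ∫ r in a..(a + s), deriv g r = g (a + s) - g a := by
    apply intervalIntegral.integral_deriv_eq_sub
    · intro x _; exact hgd x
    · exact hcont.intervalIntegrable _ _
  have hconst : ∫ r in a..(a + s), deriv g a = s * deriv g a := by
    rw [intervalIntegral.integral_const]
    simp only [smul_eq_mul, add_sub_cancel_left]
  have key : g (a + s) - g a - s * deriv g a
      = ∫ r in a..(a + s), (deriv g r - deriv g a) := by
    rw [intervalIntegral.integral_sub (hcont.intervalIntegrable _ _)
      intervalIntegrable_const, hFTC, hconst]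
  rw [key]
  rcases le_or_gt 0 s with hs | hs
  · have h1 : |∫ r in a..(a + s), (deriv g r - deriv g a)|
        ≤ ∫ r in a..(a + s), |deriv g r - deriv g a| :=
      intervalIntegral.abs_integral_le_integral_abs (by linarith)
    have h2 : (∫ r in a..(a + s), |deriv g r - deriv g a|)
        ≤ ∫ r in a..(a + s), B * (r - a) := by
      apply intervalIntegral.integral_mono_on (by linarith)
      · exact ((hcont.sub continuous_const).abs).intervalIntegrable _ _
      · exact (continuous_const.mul (continuous_id.sub continuous_const)).intervalIntegrable _ _
      · intro r hr
        calc |deriv g r - deriv g a| ≤ B * |r - a| := hLip' r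
          _ = B * (r - a) := by rw [abs_of_nonneg (by linarith [hr.1])]
    have h3 : (∫ r in a..(a + s), B * (r - a)) = B * s ^ 2 / 2 := by
      rw [intervalIntegral.integral_const_mul,
        intervalIntegral.integral_sub intervalIntegral.intervalIntegrable_id intervalIntegrable_const,
        integral_id, intervalIntegral.integral_const]
      simp only [smul_eq_mul]
      ring
    linarith
  · have hsymm : |∫ r in a..(a + s), (deriv g r - deriv g a)|
        = |∫ r in (a + s)..a, (deriv g r - deriv g a)| := by
      rw [intervalIntegral.integral_symm, abs_neg]
    have h1 : |∫ r in (a + s)..a, (deriv g r - deriv g a)|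
        ≤ ∫ r in (a + s)..a, |deriv g r - deriv g a| :=
      intervalIntegral.abs_integral_le_integral_abs (by linarith)
    have h2 : (∫ r in (a + s)..a, |deriv g r - deriv g a|)
        ≤ ∫ r in (a + s)..a, B * (a - r) := by
      apply intervalIntegral.integral_mono_on (by linarith)
      · exact ((hcont.sub continuous_const).abs).intervalIntegrable _ _
      · exact (continuous_const.mul (continuous_const.sub continuous_id)).intervalIntegrable _ _
      · intro r hr
        calc |deriv g r - deriv g a| ≤ B * |r - a| := hLip' r
          _ = B * (a - r) := by
            rw [abs_of_nonpos (by linarith [hr.2]), neg_sub]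
    have h3 : (∫ r in (a + s)..a, B * (a - r)) = B * s ^ 2 / 2 := by
      rw [intervalIntegral.integral_const_mul,
        intervalIntegral.integral_sub intervalIntegrable_const intervalIntegral.intervalIntegrable_id,
        integral_id, intervalIntegral.integral_const]
      simp only [smul_eq_mul]
      ring
    rw [hsymm]
    linarith

/-- Intermediate estimate in the proof of Theorem 4.2: the generalization risk
`R^σ(f)` is a second-order (in `σ`) approximation of the modal regression risk
`R(f)`: `|R^σ(f) − R(f)| ≤ (σ²/2)·B·∫ u² φ(u) du`. -/
theorem generalization_risk_second_order_approximation
    {X : Type*} [MeasurableSpace X] (μ : Measure X) [IsProbabilityMeasure μ]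
    (fstar : X → ℝ) (hfstar : Measurable fstar)
    (q : X → ℝ → ℝ) (hq_meas : Measurable (Function.uncurry q))
    (hq_nonneg : ∀ x t, 0 ≤ q x t) (hq_int : ∀ x, ∫ t, q x t = 1)
    (hq_smooth : ∀ x, ContDiff ℝ 2 (q x))
    (B : ℝ) (hB : ∀ x t, |deriv (deriv (q x)) t| ≤ B)
    (φ : ℝ → ℝ) (hφ_meas : Measurable φ) (hφ_nonneg : ∀ u, 0 ≤ φ u)
    (hφ_bdd : ∃ Cφ : ℝ, ∀ u, φ u ≤ Cφ)
    (hφ_even : ∀ u, φ (-u) = φ u)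
    (hφ_int : ∫ u, φ u = 1)
    (hφ_mom : Integrable (fun u => u ^ 2 * φ u))
    (f : X → ℝ) (hf : Measurable f) (σ : ℝ) (hσ : 0 < σ) :
    |(∫ x, (∫ t, (1 / σ) * φ ((t - (f x - fstar x)) / σ) * q x t) ∂μ)
        - ∫ x, q x (f x - fstar x) ∂μ|
      ≤ σ ^ 2 / 2 * B * ∫ u, u ^ 2 * φ u := by
  -- `X` is nonempty since `μ` is a probability measure
  have hXne : Nonempty X := by
    by_contra h
    rw [not_nonempty_iff] at h
    have h1 : μ Set.univ = 1 := measure_univ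
    rw [Set.univ_eq_empty_iff.mpr h] at h1
    simp at h1
  obtain ⟨x₀⟩ := hXne
  have hB0 : 0 ≤ B := le_trans (abs_nonneg _) (hB x₀ 0)
  set C := ∫ u, u ^ 2 * φ u with hCdef
  have hC0 : 0 ≤ C := integral_nonneg fun u => mul_nonneg (sq_nonneg u) (hφ_nonneg u)
  set D := σ ^ 2 / 2 * B * C with hDdef
  have hD0 : 0 ≤ D := by positivity
  -- `φ` is integrable
  have hφ_integrable : Integrable φ := by
    by_contra h
    rw [integral_undef h] at hφ_int
    norm_num at hφ_int
  -- `u * φ u` is integrable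
  have huφ_integrable : Integrable (fun u : ℝ => u * φ u) := by
    apply (hφ_integrable.add hφ_mom).mono
      (measurable_id.mul hφ_meas).aestronglyMeasurable
    filter_upwards with u
    have h1 : |u| ≤ 1 + u ^ 2 := by nlinarith [sq_nonneg (|u| - 1), sq_abs u]
    simp only [Pi.add_apply, Pi.mul_apply, Real.norm_eq_abs, id_eq]
    rw [abs_mul, abs_of_nonneg (hφ_nonneg u),
      abs_of_nonneg (add_nonneg (hφ_nonneg u) (mul_nonneg (sq_nonneg u) (hφ_nonneg u)))]
    nlinarith [mul_le_mul_of_nonneg_right h1 (hφ_nonneg u)]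
  -- odd moment vanishes
  have hodd : ∫ u : ℝ, u * φ u = 0 := by
    have h1 : ∫ u : ℝ, -u * φ (-u) = ∫ u : ℝ, u * φ u :=
      integral_neg_eq_self (fun u : ℝ => u * φ u) volume
    have h2 : ∫ u : ℝ, -u * φ (-u) = -∫ u : ℝ, u * φ u := by
      simp_rw [hφ_even]
      rw [← integral_neg]
      congr 1; funext u; ring
    linarith [h1.symm.trans h2]
  -- change of variables in the inner integral
  have hcov : ∀ x : X, (∫ t, (1 / σ) * φ ((t - (f x - fstar x)) / σ) * q x t)
      = ∫ u, φ u * q x ((f x - fstar x) + σ * u) := by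
    intro x
    set a := f x - fstar x with ha
    have h1 : (∫ t, (1 / σ) * φ ((t - a) / σ) * q x t)
        = ∫ t, (1 / σ) * φ (t / σ) * q x (t + a) := by
      rw [← integral_add_right_eq_self (μ := volume)
        (fun t => (1 / σ) * φ ((t - a) / σ) * q x t) a]
      congr 1; funext t
      rw [add_sub_cancel_right]
    have h2 : (∫ u : ℝ, (1 / σ) * φ ((σ * u) / σ) * q x ((σ * u) + a))
        = |σ⁻¹| • ∫ t, (1 / σ) * φ (t / σ) * q x (t + a) :=
      Measure.integral_comp_mul_left (fun t => (1 / σ) * φ (t / σ) * q x (t + a)) σ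
    have habs : |σ⁻¹| = σ⁻¹ := abs_of_pos (inv_pos.mpr hσ)
    have hmul : ∀ u : ℝ, σ * (1 / σ * φ (σ * u / σ) * q x (σ * u + a))
        = φ u * q x (a + σ * u) := by
      intro u
      rw [mul_div_cancel_left₀ _ (ne_of_gt hσ), add_comm (σ * u) a, ← mul_assoc, ← mul_assoc,
        mul_one_div, div_self (ne_of_gt hσ), one_mul]
    symm
    calc ∫ u, φ u * q x (a + σ * u)
        = ∫ u, σ * ((1 / σ) * φ ((σ * u) / σ) * q x ((σ * u) + a)) := by
          congr 1; funext u
          exact (hmul u).symm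
      _ = σ * ∫ u, (1 / σ) * φ ((σ * u) / σ) * q x ((σ * u) + a) := integral_const_mul σ _
      _ = σ * (|σ⁻¹| • ∫ t, (1 / σ) * φ (t / σ) * q x (t + a)) := by rw [h2]
      _ = ∫ t, (1 / σ) * φ (t / σ) * q x (t + a) := by
          rw [smul_eq_mul, habs, ← mul_assoc, mul_inv_cancel₀ (ne_of_gt hσ), one_mul]
      _ = ∫ t, (1 / σ) * φ ((t - a) / σ) * q x t := h1.symm
  -- key pointwise estimate
  have hGnonneg : ∀ x : X, 0 ≤ ∫ u, φ u * q x ((f x - fstar x) + σ * u) := fun x =>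
    integral_nonneg fun u => mul_nonneg (hφ_nonneg u) (hq_nonneg _ _)
  have hkey : ∀ x : X,
      |(∫ u, φ u * q x ((f x - fstar x) + σ * u)) - q x (f x - fstar x)| ≤ D := by
    intro x
    set a := f x - fstar x with ha
    set d := deriv (q x) a with hd
    set r : ℝ → ℝ := fun u => q x (a + σ * u) - q x a - σ * u * d with hrdef
    have hrb : ∀ u : ℝ, |r u| ≤ B * σ ^ 2 / 2 * u ^ 2 := by
      intro u
      have h := taylor_bound_aux (q x) (hq_smooth x) B (hB x) a (σ * u)
      calc |r u| ≤ B * (σ * u) ^ 2 / 2 := h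
        _ = B * σ ^ 2 / 2 * u ^ 2 := by ring
    have hqc : Continuous (q x) := (hq_smooth x).continuous
    have hmr : Measurable r := by
      apply Measurable.sub
      · apply Measurable.sub
        · exact hqc.measurable.comp (measurable_const.add (measurable_const.mul measurable_id))
        · exact measurable_const
      · exact (measurable_const.mul measurable_id).mul measurable_const
    have i1 : Integrable (fun u : ℝ => φ u * q x a) := hφ_integrable.mul_const _
    have i2 : Integrable (fun u : ℝ => σ * d * (u * φ u)) := huφ_integrable.const_mul _
    have i3 : Integrable (fun u : ℝ => φ u * r u) := by
      apply (hφ_mom.const_mul (B * σ ^ 2 / 2)).mono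
        (hφ_meas.mul hmr).aestronglyMeasurable
      filter_upwards with u
      rw [Real.norm_eq_abs, Real.norm_eq_abs, Pi.mul_apply, abs_mul, abs_of_nonneg (hφ_nonneg u)]
      calc φ u * |r u| ≤ φ u * (B * σ ^ 2 / 2 * u ^ 2) :=
            mul_le_mul_of_nonneg_left (hrb u) (hφ_nonneg u)
        _ = B * σ ^ 2 / 2 * (u ^ 2 * φ u) := by ring
        _ ≤ |B * σ ^ 2 / 2 * (u ^ 2 * φ u)| := le_abs_self _
    have hsplit : (fun u : ℝ => φ u * q x (a + σ * u))
        = fun u : ℝ => φ u * q x a + σ * d * (u * φ u) + φ u * r u := by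
      funext u
      simp only [hrdef]
      ring
    have i12 : Integrable (fun u : ℝ => φ u * q x a + σ * d * (u * φ u)) := i1.add i2
    have hGval : (∫ u, φ u * q x (a + σ * u)) = q x a + ∫ u, φ u * r u := by
      rw [hsplit, integral_add i12 i3, integral_add i1 i2,
        integral_mul_const, hφ_int, integral_const_mul, hodd]
      ring
    rw [hGval]
    have h5 : |q x a + (∫ u, φ u * r u) - q x a| = |∫ u, φ u * r u| := by
      congr 1; ring
    rw [h5]
    calc |∫ u, φ u * r u| ≤ ∫ u, |φ u * r u| := by
          have := norm_integral_le_integral_norm (μ := volume) (fun u : ℝ => φ u * r u)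
          simpa only [Real.norm_eq_abs] using this
      _ ≤ ∫ u, B * σ ^ 2 / 2 * (u ^ 2 * φ u) := by
          apply integral_mono i3.abs (hφ_mom.const_mul _)
          intro u
          show |φ u * r u| ≤ B * σ ^ 2 / 2 * (u ^ 2 * φ u)
          rw [abs_mul, abs_of_nonneg (hφ_nonneg u)]
          calc φ u * |r u| ≤ φ u * (B * σ ^ 2 / 2 * u ^ 2) :=
                mul_le_mul_of_nonneg_left (hrb u) (hφ_nonneg u)
            _ = B * σ ^ 2 / 2 * (u ^ 2 * φ u) := by ring
      _ = B * σ ^ 2 / 2 * C := by rw [integral_const_mul]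
      _ = D := by rw [hDdef]; ring
  -- measurability of the two outer integrands
  have hQmeas : Measurable (fun x : X => q x (f x - fstar x)) :=
    hq_meas.comp (measurable_id.prodMk (hf.sub hfstar))
  have hGmeas : StronglyMeasurable
      (fun x : X => ∫ u, φ u * q x ((f x - fstar x) + σ * u)) := by
    apply StronglyMeasurable.integral_prod_right'
      (f := fun p : X × ℝ => φ p.2 * q p.1 ((f p.1 - fstar p.1) + σ * p.2))
    apply Measurable.stronglyMeasurable
    exact (hφ_meas.comp measurable_snd).mul
      (hq_meas.comp (measurable_fst.prodMk
        (((hf.comp measurable_fst).sub (hfstar.comp measurable_fst)).add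
          (measurable_const.mul measurable_snd))))
  -- rewrite the inner integral
  have hrw : (∫ x, (∫ t, (1 / σ) * φ ((t - (f x - fstar x)) / σ) * q x t) ∂μ)
      = ∫ x, (∫ u, φ u * q x ((f x - fstar x) + σ * u)) ∂μ :=
    integral_congr_ae (Filter.Eventually.of_forall hcov)
  rw [hrw]
  by_cases hQ : Integrable (fun x : X => q x (f x - fstar x)) μ
  · have hG : Integrable (fun x : X => ∫ u, φ u * q x ((f x - fstar x) + σ * u)) μ := by
      apply Integrable.mono' (hQ.add (integrable_const D)) hGmeas.aestronglyMeasurable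
      filter_upwards with x
      simp only [Pi.add_apply]
      rw [Real.norm_eq_abs, abs_of_nonneg (hGnonneg x)]
      linarith [(abs_le.mp (hkey x)).2]
    rw [← integral_sub hG hQ]
    calc |∫ x, ((∫ u, φ u * q x ((f x - fstar x) + σ * u)) - q x (f x - fstar x)) ∂μ|
        ≤ ∫ x, |(∫ u, φ u * q x ((f x - fstar x) + σ * u)) - q x (f x - fstar x)| ∂μ := by
          simpa [Real.norm_eq_abs] using norm_integral_le_integral_norm
            (fun x : X => (∫ u, φ u * q x ((f x - fstar x) + σ * u)) - q x (f x - fstar x))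
      _ ≤ ∫ _x, D ∂μ := integral_mono (hG.sub hQ).abs (integrable_const D) fun x => hkey x
      _ = D := by simp
  · have hGnot : ¬ Integrable
        (fun x : X => ∫ u, φ u * q x ((f x - fstar x) + σ * u)) μ := by
      intro hG
      apply hQ
      apply Integrable.mono' (hG.add (integrable_const D)) hQmeas.aestronglyMeasurable
      filter_upwards with x
      simp only [Pi.add_apply]
      rw [Real.norm_eq_abs, abs_of_nonneg (hq_nonneg _ _)]
      linarith [(abs_le.mp (hkey x)).1]
    rw [integral_undef hGnot, integral_undef hQ]
    simpa using hD0
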